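/- Let O be a complete discrete valuation ring with algebraically closed (or just fixed) fraction field embedding, and let A(u) be a monic polynomial over the fraction field all of whose roots lie in the maximal ideal (have positive valuation), with A(0) ≠ 0. Let f(u) ∈ O[u] be monic of degree p with f(u) ≡ u^p mod ϖ and f(0) = 0. If A(u)·E(u)^m = A^φ(f(u)) for some monic polynomial E(u) with all roots of positive valuation and some m ≥ 0, where A^φ denotes applying a valuation-preserving field automorphism φ to the coefficients of A, then A is constant (A = 1). -/

import Mathlib

open Polynomial

private lemma val_aux {Γ₀ : Type*} [LinearOrderedCommGroupWithZero Γ₀] (a b : Γ₀)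
    (ha : a < 1) (hb : b < 1) (hb0 : b ≠ 0) (i : ℕ) (hi : 1 ≤ i) : a * b ^ i < b := by
  have h1 : b ^ i ≤ b := by
    calc b ^ i = b ^ (i-1) * b := by rw [← pow_succ]; congr 1; omega
    _ ≤ 1 * b := by gcongr; exact pow_le_one₀ zero_le' hb.le
    _ = b := one_mul _
  have h2 : a * b ^ i ≤ a * b := by gcongr
  refine h2.trans_lt ?_
  calc a * b = b * a := mul_comm _ _
  _ < b * 1 := mul_lt_mul_of_pos_left ha (zero_lt_iff.mpr hb0)
  _ = b := mul_one _

/-- Heart of the proof of Proposition 3.7: let `K` be an algebraically closed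
field with a valuation `v` (multiplicative notation: "positive valuation" means
`v < 1`).  Let `A` be a monic polynomial all of whose roots have positive
valuation, with `A(0) ≠ 0`; let `f` be monic of degree `p` with `f(0) = 0` and
`f ≡ u^p mod 𝔪` (all coefficients `a_i`, `1 ≤ i < p`, of positive valuation);
let `E` be monic with all roots of positive valuation; and let `φ` be a
valuation-preserving field automorphism of `K`.  If
`A(u)·E(u)^m = A^φ(f(u))` then `A = 1`. -/
theorem stmt_9 {K : Type*} [Field K] [IsAlgClosed K] {Γ₀ : Type*}
    [LinearOrderedCommGroupWithZero Γ₀] (v : Valuation K Γ₀)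
    (p : ℕ) (hp : p.Prime)
    (A : Polynomial K) (hAm : A.Monic)
    (hAroots : ∀ x : K, A.eval x = 0 → v x < 1)
    (hA0 : A.eval 0 ≠ 0)
    (f : Polynomial K) (hfm : f.Monic) (hfd : f.natDegree = p)
    (hf0 : f.coeff 0 = 0)
    (hfc : ∀ i, 1 ≤ i → i < p → v (f.coeff i) < 1)
    (E : Polynomial K) (hEm : E.Monic)
    (hEroots : ∀ x : K, E.eval x = 0 → v x < 1)
    (m : ℕ)
    (φ : K ≃+* K) (hφ : ∀ x : K, v (φ x) = v x)
    (heq : A * E ^ m = (A.map (φ : K →+* K)).comp f) :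
    A = 1 := by
  classical
  by_contra hA1
  -- A has a root
  have hdeg : A.natDegree ≠ 0 := fun h => hA1 (hAm.natDegree_eq_zero.mp h)
  have hAne : A ≠ 0 := hAm.ne_zero
  -- the set of roots is nonempty
  have hrootsne : A.roots.toFinset.Nonempty := by
    obtain ⟨x, hx⟩ := IsAlgClosed.exists_root A (by
      rw [degree_eq_natDegree hAne]; exact_mod_cast hdeg)
    exact ⟨x, by simp only [Multiset.mem_toFinset, mem_roots hAne]; exact hx⟩
  -- pick a root of minimal valuation
  obtain ⟨x₀, hx₀mem, hx₀min⟩ := Finset.exists_min_image A.roots.toFinset v hrootsne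
  have hx₀root : A.eval x₀ = 0 := by
    have := Multiset.mem_toFinset.mp hx₀mem
    rw [mem_roots hAne] at this
    exact this
  have hx₀ne : x₀ ≠ 0 := fun h => hA0 (h ▸ hx₀root)
  have hvx₀ne : v x₀ ≠ 0 := fun h => hx₀ne (v.zero_iff.mp h)
  have hvx₀lt : v x₀ < 1 := hAroots x₀ hx₀root
  -- f(x₀) is a root of A^φ
  have hfx₀ : (A.map (φ : K →+* K)).eval (f.eval x₀) = 0 := by
    have := congrArg (Polynomial.eval x₀) heq
    rw [eval_mul, hx₀root, zero_mul, eval_comp] at this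
    exact this.symm
  -- f(x₀) ≠ 0
  have hfx₀ne : f.eval x₀ ≠ 0 := by
    intro h
    rw [h] at hfx₀
    apply hA0
    have : (φ : K →+* K) (A.eval 0) = 0 := by
      rw [← eval₂_hom (φ : K →+* K) (0 : K)]
      simpa [eval_map] using hfx₀
    exact φ.injective (by simpa using this)
  -- y := φ⁻¹(f(x₀)) is a root of A
  set y : K := φ.symm (f.eval x₀) with hy
  have hyroot : A.eval y = 0 := by
    apply φ.injective
    have : (A.map (φ : K →+* K)).eval ((φ : K →+* K) y) = (φ : K →+* K) (A.eval y) := by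
      rw [eval_map, eval₂_hom]
    have h2 : (φ : K →+* K) (A.eval y) = 0 := by
      rw [← this]; simpa [hy] using hfx₀
    simpa using h2
  have hvy : v y = v (f.eval x₀) := by
    rw [← hφ y]; simp [hy]
  -- key valuation estimate : v (f.eval x₀) < v x₀
  have hkey : v (f.eval x₀) < v x₀ := by
    rw [eval_eq_sum_range (p := f) x₀, hfd]
    apply Valuation.map_sum_lt v hvx₀ne
    intro i hi
    rw [Finset.mem_range] at hi
    rcases Nat.eq_zero_or_pos i with h0 | h1
    · subst h0
      simp [hf0]
      exact lt_of_le_of_ne zero_le' (Ne.symm hvx₀ne)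
    · rcases eq_or_lt_of_le (Nat.lt_succ_iff.mp hi) with hip | hip
      · -- i = p : leading coefficient is 1
        subst hip
        have hc : f.coeff i = 1 := by
          have := hfm.leadingCoeff
          rwa [leadingCoeff, hfd] at this
        rw [map_mul, hc, map_one, one_mul, map_pow]
        have hi2 : 2 ≤ i := hp.two_le
        have hsplit : (v x₀) ^ i = (v x₀) ^ (i - 1) * (v x₀) ^ 1 := by
          rw [← pow_add]; congr 1; omega
        rw [hsplit]
        exact val_aux _ _ (pow_lt_one₀ zero_le' hvx₀lt (by omega)) hvx₀lt hvx₀ne 1 le_rfl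
      · -- 1 ≤ i < p
        rw [map_mul, map_pow]
        exact val_aux _ _ (hfc i h1 hip) hvx₀lt hvx₀ne i h1
  rw [← hvy] at hkey
  have : v x₀ ≤ v y := hx₀min y (Multiset.mem_toFinset.mpr ((mem_roots hAne).mpr hyroot))
  exact absurd hkey (not_lt.mpr this)
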